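/- Let P : ℤ^9 → ℤ^9 be the permutation fixing the first coordinate d and cyclically permuting (m₁, ..., m₈) by m₁ ↦ m₈, mᵢ ↦ m_{i-1} for i ≥ 2 (i.e. (d, m₁, ..., m₈) ↦ (d, m₂, m₃, m₄, m₅, m₆, m₇, m₈, m₁)), and let M be the Cremona action as above. Set M_σ = P ∘ M. Then the characteristic polynomial of M_σ (as a 9×9 integer matrix) has 1 as a root with algebraic multiplicity at least 3. -/
import Mathlib
set_option maxHeartbeats 1000000


open Matrix

/-- The Cremona action on `(d, m₁, …, m₈)` centered at the first four points,
as a 9×9 integer matrix in the basis `(H, E₁, …, E₈)`. -/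
def Cremona : Matrix (Fin 9) (Fin 9) ℤ :=
  !![3,-1,-1,-1,-1,0,0,0,0;
     2, 0,-1,-1,-1,0,0,0,0;
     2,-1, 0,-1,-1,0,0,0,0;
     2,-1,-1, 0,-1,0,0,0,0;
     2,-1,-1,-1, 0,0,0,0,0;
     0, 0, 0, 0, 0,1,0,0,0;
     0, 0, 0, 0, 0,0,1,0,0;
     0, 0, 0, 0, 0,0,0,1,0;
     0, 0, 0, 0, 0,0,0,0,1]

/-- The permutation `(d, m₁, …, m₈) ↦ (d, m₂, …, m₈, m₁)`. -/
def CyclicShift : Matrix (Fin 9) (Fin 9) ℤ :=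
  !![1,0,0,0,0,0,0,0,0;
     0,0,1,0,0,0,0,0,0;
     0,0,0,1,0,0,0,0,0;
     0,0,0,0,1,0,0,0,0;
     0,0,0,0,0,1,0,0,0;
     0,0,0,0,0,0,1,0,0;
     0,0,0,0,0,0,0,1,0;
     0,0,0,0,0,0,0,0,1;
     0,1,0,0,0,0,0,0,0]

/-- The Coxeter element `M_σ = P ∘ M`. -/
def Msigma : Matrix (Fin 9) (Fin 9) ℤ := CyclicShift * Cremona

namespace CremonaAux

/-- The basis-change matrix (columns: a Jordan chain for eigenvalue 1, then a completion). -/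
def Pmat : Matrix (Fin 9) (Fin 9) ℤ :=
  !![2,-4,13,1,0,0,0,0,0;
     1,-1, 4,0,1,0,0,0,0;
     1,-2, 7,0,0,1,0,0,0;
     1,-3, 9,0,0,0,1,0,0;
     1,-4,10,0,0,0,0,1,0;
     1,-3, 6,0,0,0,0,0,1;
     1,-2, 3,0,0,0,0,0,0;
     1,-1, 1,0,0,0,0,0,0;
     1, 0, 0,0,0,0,0,0,0]

def Qmat : Matrix (Fin 9) (Fin 9) ℤ :=
  !![0,0,0,0,0,0, 0, 0, 1;
     0,0,0,0,0,0, 1,-3, 2;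
     0,0,0,0,0,0, 1,-2, 1;
     1,0,0,0,0,0,-9,14,-7;
     0,1,0,0,0,0,-3, 5,-3;
     0,0,1,0,0,0,-5, 8,-4;
     0,0,0,1,0,0,-6, 9,-4;
     0,0,0,0,1,0,-6, 8,-3;
     0,0,0,0,0,1,-3, 3,-1]

def Umat : Matrix (Fin 3) (Fin 3) ℤ := !![1,1,0; 0,1,1; 0,0,1]

def Bmat : Matrix (Fin 3) (Fin 6) ℤ :=
  !![2,0,-1,-1,-1,0;
     4,0,-2,-2,-2,0;
     2,0,-1,-1,-1,0]

def Dmat : Matrix (Fin 6) (Fin 6) ℤ :=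
  !![-11,-1,6,6,6,0;
      -4,-1,3,2,2,0;
      -6,-1,3,4,3,0;
      -6,-1,3,3,4,0;
      -6, 0,3,3,3,1;
      -2, 0,1,1,1,0]

lemma hQP : Qmat * Pmat = 1 := by decide

lemma hPQ : Pmat * Qmat = 1 := by decide

open Polynomial in
lemma charpoly_conj {n : ℕ} (M P Q : Matrix (Fin n) (Fin n) ℤ)
    (_h1 : P * Q = 1) (h2 : Q * P = 1) : (Q * M * P).charpoly = M.charpoly := by
  have hmap : ∀ A B : Matrix (Fin n) (Fin n) ℤ,
      (C : ℤ →+* ℤ[X]).mapMatrix (A * B) = C.mapMatrix A * C.mapMatrix B := fun A B => by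
    simp
  have key : charmatrix (Q * M * P) =
      (C : ℤ →+* ℤ[X]).mapMatrix Q * charmatrix M * (C : ℤ →+* ℤ[X]).mapMatrix P := by
    unfold charmatrix
    rw [hmap, hmap, Matrix.mul_sub, Matrix.sub_mul]
    congr 1
    · rw [Matrix.mul_assoc, scalar_commute (X : ℤ[X]) (fun r => (Commute.all _ _)) _,
        ← Matrix.mul_assoc, ← hmap, h2, _root_.map_one, Matrix.one_mul]

  have hdet1 : ((C : ℤ →+* ℤ[X]).mapMatrix Q).det * ((C : ℤ →+* ℤ[X]).mapMatrix P).det = 1 := by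
    rw [← det_mul, ← hmap, h2, _root_.map_one, det_one]
  unfold Matrix.charpoly
  rw [key, det_mul, det_mul]
  linear_combination M.charmatrix.det * hdet1

end CremonaAux

open Polynomial in
/-- the characteristic polynomial of `M_σ` has `1` as a root of
algebraic multiplicity at least `3`. -/
theorem msigma_charpoly_one_multiplicity : (X - C 1) ^ 3 ∣ Msigma.charpoly := by
  have hconj : (CremonaAux.Qmat * Msigma * CremonaAux.Pmat).charpoly = Msigma.charpoly :=
    CremonaAux.charpoly_conj _ _ _ CremonaAux.hPQ CremonaAux.hQP
  have hT : CremonaAux.Qmat * Msigma * CremonaAux.Pmat =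
      (Matrix.reindex finSumFinEquiv finSumFinEquiv)
        (Matrix.fromBlocks CremonaAux.Umat CremonaAux.Bmat 0 CremonaAux.Dmat) := by decide
  have hU : CremonaAux.Umat.charpoly = (X - C 1) ^ 3 := by
    rw [Matrix.charpoly_of_upperTriangular _ ?_]
    · rw [Fin.prod_univ_three,
        show CremonaAux.Umat 0 0 = 1 from rfl, show CremonaAux.Umat 1 1 = 1 from rfl,
        show CremonaAux.Umat 2 2 = 1 from rfl]
      ring
    · intro i j hij
      fin_cases i <;> fin_cases j <;> first | rfl | exact absurd hij (by decide)
  rw [← hconj, hT, Matrix.charpoly_reindex, Matrix.charpoly_fromBlocks_zero₂₁, hU]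
  exact Dvd.intro _ rfl
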